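/- Let p be a prime and T the p-ary rooted tree. For a ∈ Aut(T), the following are equivalent: (1) a is minimal; (2) a acts transitively on V_n for every n; (3) the order of a restricted to V_n equals p^n for every n; (4) the closure of ⟨a⟩ is isometrically isomorphic to the p-adic integers Z_p; (5) the dynamical system (∂T, a) is conjugate by an isometry to the p-adic odometer (Z_p, x ↦ x+1). -/

import Mathlib

/-- The boundary of the spherically homogeneous rooted tree with spherical
index `m`: infinite paths are sequences `x` with `x n ∈ {0, …, m n - 1}`. -/
abbrev Bd (m : ℕ → ℕ) : Type := ∀ n : ℕ, Fin (m n)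

/-- A permutation of the boundary is a tree automorphism iff it preserves the
relation "agree on the first `N` coordinates" (i.e. it permutes each vertex
level preserving the tree structure). -/
def IsTreeAut {m : ℕ → ℕ} (e : Equiv.Perm (Bd m)) : Prop :=
  ∀ (N : ℕ) (x y : Bd m), (∀ n < N, x n = y n) ↔ (∀ n < N, e x n = e y n)

/-- The automorphism group of the spherically homogeneous rooted tree with
spherical index `m`, realized as a subgroup of the permutations of the
boundary. -/
def treeAutGroup (m : ℕ → ℕ) : Subgroup (Equiv.Perm (Bd m)) where
  carrier := {e | IsTreeAut e}
  one_mem' := fun _ _ _ => Iff.rfl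
  mul_mem' := by
    intro a b ha hb N x y
    exact (hb N x y).trans (ha N (b x) (b y))
  inv_mem' := by
    intro a ha N x y
    have h := ha N (a⁻¹ x) (a⁻¹ y)
    simpa [Equiv.Perm.coe_inv, Equiv.apply_symm_apply] using h.symm

/-- The orbit of `x` under the cyclic group generated by `a`. -/
def orbitZ {m : ℕ → ℕ} (a : Equiv.Perm (Bd m)) (x : Bd m) : Set (Bd m) :=
  {y | ∃ k : ℤ, (a ^ k) x = y}

/-- `a` acts transitively on every vertex level `V n` (vertices at level `n`
are identified with length-`n` prefixes of boundary points). -/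
def LevelTransitive {m : ℕ → ℕ} (a : Equiv.Perm (Bd m)) : Prop :=
  ∀ (n : ℕ) (x y : Bd m), ∃ k : ℤ, ∀ i < n, ((a ^ k) x) i = y i

/-- `f` belongs to the closure of the set `Γ` of tree automorphisms in the
profinite (= uniform) topology on `Aut(T)`: for every level `n` there is an
element of `Γ` agreeing with `f` up to level `n` everywhere. -/
def InClosure {m : ℕ → ℕ} (Γ : Set (Equiv.Perm (Bd m))) (f : Bd m → Bd m) : Prop :=
  ∀ n : ℕ, ∃ g ∈ Γ, ∀ x : Bd m, ∀ i < n, f x i = g x i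

-- The ultrametric `d(x, y) = 2 ^ (-(k-1))` where `k` is the first (1-indexed)
-- coordinate at which the sequences `x` and `y` differ.
open Classical in
noncomputable def ultraDist {α : ℕ → Type*} (x y : ∀ n, α n) : ℝ :=
  if h : x = y then 0 else (2 : ℝ)⁻¹ ^ Nat.find (Function.ne_iff.mp h)

/-- The uniform distance `D(f, g) = sup_x d (f x) (g x)`. -/
noncomputable def ultraDistMap {m : ℕ → ℕ} (f g : Bd m → Bd m) : ℝ :=
  ⨆ x : Bd m, ultraDist (f x) (g x)

/-- The `p`-adic integers, realized as the inverse limit of the rings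
`ℤ/p^(n+1)ℤ`, with the metric `ultraDist` of the paper. -/
def Zadic (p : ℕ) : Type :=
  {x : ∀ n : ℕ, ZMod (p ^ (n + 1)) //
    ∀ n, ZMod.castHom (pow_dvd_pow p (Nat.le_succ (n + 1))) (ZMod (p ^ (n + 1))) (x (n + 1)) = x n}

section TreeLemmas

variable {m : ℕ → ℕ} {a : Equiv.Perm (Bd m)}

lemma zpow_apply_add (a : Equiv.Perm (Bd m)) (s t : ℤ) (x : Bd m) :
    (a ^ (s + t)) x = (a ^ s) ((a ^ t) x) := by
  rw [zpow_add, Equiv.Perm.mul_apply]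

lemma pres (ha : a ∈ treeAutGroup m) (k : ℤ) (N : ℕ) (x y : Bd m) :
    (∀ i < N, x i = y i) ↔ (∀ i < N, (a ^ k) x i = (a ^ k) y i) :=
  ((treeAutGroup m).zpow_mem ha k) N x y

/-- the stabilizer of the level-`n` prefix of `x`, as an additive subgroup of `ℤ`. -/
def stab (a : Equiv.Perm (Bd m)) (ha : a ∈ treeAutGroup m) (n : ℕ) (x : Bd m) :
    AddSubgroup ℤ where
  carrier := {t | ∀ i < n, (a ^ t) x i = x i}
  zero_mem' := by intro i _; simp
  add_mem' := by
    intro s t hs ht i hi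
    rw [zpow_apply_add]
    have h1 := (pres ha s n ((a ^ t) x) x).mp ht i hi
    rw [h1]
    exact hs i hi
  neg_mem' := by
    intro t ht i hi
    have h1 := (pres ha (-t) n ((a ^ t) x) x).mp ht i hi
    have h2 : (a ^ (-t)) ((a ^ t) x) = x := by
      rw [← zpow_apply_add, neg_add_cancel, zpow_zero, Equiv.Perm.one_apply]
    rw [h2] at h1
    exact h1.symm

lemma shift (ha : a ∈ treeAutGroup m) (n : ℕ) (x : Bd m) (u s : ℤ) :
    (∀ i < n, (a ^ u) ((a ^ s) x) i = (a ^ s) x i) ↔ (∀ i < n, (a ^ u) x i = x i) := by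
  have h := pres ha s n ((a ^ u) x) x
  have e : (a ^ s) ((a ^ u) x) = (a ^ u) ((a ^ s) x) := by
    rw [← zpow_apply_add, ← zpow_apply_add, add_comm]
  rw [e] at h
  exact h.symm

lemma mem_stab_shift (ha : a ∈ treeAutGroup m) (n : ℕ) (x : Bd m) (s t : ℤ) :
    (∀ i < n, (a ^ s) x i = (a ^ t) x i) ↔ (s - t) ∈ stab a ha n x := by
  have e : (a ^ s) x = (a ^ (s - t)) ((a ^ t) x) := by
    rw [← zpow_apply_add, sub_add_cancel]
  rw [e]
  exact shift ha n x (s - t) t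

end TreeLemmas

section Period

variable {p : ℕ} {a : Equiv.Perm (Bd (fun _ => p))}

lemma period (hp : p.Prime) (ha : a ∈ treeAutGroup (fun _ => p)) (h2 : LevelTransitive a)
    (n : ℕ) (x : Bd (fun _ => p)) (t : ℤ) :
    (∀ i < n, (a ^ t) x i = x i) ↔ ((p : ℤ) ^ n ∣ t) := by
  obtain ⟨g, hg⟩ := Int.subgroup_cyclic (stab a ha n x)
  have hmem : ∀ s : ℤ, s ∈ stab a ha n x ↔ g ∣ s := by
    intro s
    rw [hg, AddSubgroup.mem_closure_singleton]
    constructor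
    · rintro ⟨k, rfl⟩; exact ⟨k, by rw [zsmul_eq_mul, Int.cast_id, mul_comm]⟩
    · rintro ⟨c, rfl⟩; exact ⟨c, by rw [zsmul_eq_mul, Int.cast_id, mul_comm]⟩
  -- the induced map on ℤ
  have hFiff : ∀ s t : ℤ, (∀ i < n, (a ^ s) x i = (a ^ t) x i) ↔ g ∣ (s - t) := by
    intro s t
    rw [mem_stab_shift ha n x s t, hmem]
  have hg0 : g ≠ 0 := by
    intro h0
    subst h0
    have hinj : Function.Injective (fun s : ℤ => (fun i : Fin n => (a ^ s) x i)) := by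
      intro s t hst
      have : (0 : ℤ) ∣ s - t := by
        rw [← hFiff]
        intro i hi
        exact congrFun hst ⟨i, hi⟩
      rw [zero_dvd_iff, sub_eq_zero] at this
      exact this
    haveI := Finite.of_injective _ hinj
    exact not_finite ℤ
  set M := g.natAbs with hM
  have hM0 : 0 < M := Int.natAbs_pos.mpr hg0
  haveI : NeZero M := ⟨hM0.ne'⟩
  have hmemM : ∀ s : ℤ, s ∈ stab a ha n x ↔ (M : ℤ) ∣ s := by
    intro s; rw [hmem, hM, Int.natAbs_dvd]
  have hFiffM : ∀ s t : ℤ, (∀ i < n, (a ^ s) x i = (a ^ t) x i) ↔ (M : ℤ) ∣ (s - t) := by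
    intro s t; rw [mem_stab_shift ha n x s t, hmemM]
  -- bijection between ZMod M and prefixes
  set G : ZMod M → (Fin n → Fin p) := fun k => fun i => (a ^ (k.val : ℤ)) x i with hGdef
  have hGinj : Function.Injective G := by
    intro k l hkl
    have hdvd : (M : ℤ) ∣ ((k.val : ℤ) - (l.val : ℤ)) := by
      rw [← hFiffM]
      intro i hi
      exact congrFun hkl ⟨i, hi⟩
    have : (((k.val : ℤ) - (l.val : ℤ) : ℤ) : ZMod M) = 0 :=
      (ZMod.intCast_zmod_eq_zero_iff_dvd _ _).mpr hdvd
    push_cast at this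
    rw [sub_eq_zero] at this
    rwa [ZMod.natCast_val, ZMod.natCast_val, ZMod.cast_id, ZMod.cast_id] at this
  have hGsurj : Function.Surjective G := by
    intro v
    set y : Bd (fun _ => p) := fun i => if h : i < n then v ⟨i, h⟩ else x i with hy
    obtain ⟨k, hk⟩ := h2 n x y
    refine ⟨((k : ℤ) : ZMod M), ?_⟩
    have hdvd : (M : ℤ) ∣ ((((k : ℤ) : ZMod M).val : ℤ) - k) := by
      rw [← ZMod.intCast_zmod_eq_zero_iff_dvd]
      push_cast
      rw [sub_eq_zero, ZMod.natCast_val, ZMod.cast_id]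
    funext i
    have : (a ^ ((((k : ℤ) : ZMod M).val : ℤ))) x i = (a ^ k) x i :=
      (hFiffM _ _).mpr hdvd i i.isLt
    rw [hGdef]
    simp only
    rw [this, hk i i.isLt, hy]
    simp [i.isLt]
  have hcard : M = p ^ n := by
    have := Fintype.card_of_bijective ⟨hGinj, hGsurj⟩
    rwa [ZMod.card, Fintype.card_fun, Fintype.card_fin, Fintype.card_fin] at this
  have := hmemM t
  rw [hcard] at this
  push_cast at this
  exact this
end Period

section UD

lemma ultraDist_nonneg {α : ℕ → Type*} (x y : ∀ n, α n) : 0 ≤ ultraDist x y := by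
  unfold ultraDist; split
  · exact le_refl _
  · positivity

lemma ultraDist_le_one {α : ℕ → Type*} (x y : ∀ n, α n) : ultraDist x y ≤ 1 := by
  unfold ultraDist; split
  · norm_num
  · exact pow_le_one₀ (by norm_num) (by norm_num)

lemma ultraDist_le_iff {α : ℕ → Type*} (x y : ∀ n, α n) (n : ℕ) :
    ultraDist x y ≤ (2:ℝ)⁻¹ ^ n ↔ ∀ i < n, x i = y i := by
  classical
  unfold ultraDist
  split_ifs with h
  · subst h
    simp
  · rw [(pow_right_strictAnti₀ (by norm_num : (0:ℝ) < 2⁻¹) (by norm_num)).le_iff_ge,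
      Nat.le_find_iff]
    constructor
    · intro H i hi
      exact not_not.mp (H i hi)
    · intro H i hi
      exact not_not.mpr (H i hi)

lemma ultraDist_congr {α β : ℕ → Type*} (x y : ∀ n, α n) (s t : ∀ n, β n)
    (h : ∀ n, (∀ i < n, x i = y i) ↔ (∀ i < n, s i = t i)) :
    ultraDist x y = ultraDist s t := by
  classical
  have hxy : x = y ↔ s = t := by
    constructor
    · intro e; funext i
      exact (h (i+1)).1 (fun j _ => congrFun e j) i (Nat.lt_succ_self i)
    · intro e; funext i
      exact (h (i+1)).2 (fun j _ => congrFun e j) i (Nat.lt_succ_self i)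
  unfold ultraDist
  split_ifs with h1 h2 h2
  · rfl
  · exact absurd (hxy.1 h1) h2
  · exact absurd (hxy.2 h2) h1
  · congr 1
    have h1' := Function.ne_iff.mp h1
    have h2' := Function.ne_iff.mp h2
    have hlt : ∀ k < Nat.find h1', x k = y k := by
      intro k hk
      have := Nat.find_min h1' hk
      simpa using this
    have hne : x (Nat.find h1') ≠ y (Nat.find h1') := Nat.find_spec h1'
    symm
    rw [Nat.find_eq_iff]
    constructor
    · intro hsm
      apply hne
      exact (h (Nat.find h1' + 1)).2 (by
        intro i hi
        rcases Nat.lt_succ_iff_lt_or_eq.mp hi with hi | rfl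
        · exact (h _).1 hlt i hi
        · exact hsm) _ (Nat.lt_succ_self _)
    · intro k hk
      simpa using (h _).1 hlt k hk

end UD

section ZH

lemma zmod_repr {N : ℕ} [NeZero N] (c : ZMod N) : c = ((c.val : ℤ) : ZMod N) := by
  push_cast
  rw [ZMod.natCast_val, ZMod.cast_id]

lemma castIff {N : ℕ} [NeZero N] (s t : ℤ) :
    ((s : ZMod N) = (t : ZMod N)) ↔ (N : ℤ) ∣ (s - t) := by
  rw [← sub_eq_zero, ← Int.cast_sub, ZMod.intCast_zmod_eq_zero_iff_dvd]

lemma compat_le {p : ℕ} (hp : p.Prime) (z : Zadic p) :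
    ∀ n i, i ≤ n → (((z.val n).val : ℕ) : ZMod (p ^ (i + 1))) = z.val i := by
  haveI : NeZero p := ⟨hp.ne_zero⟩
  intro n
  induction n with
  | zero =>
    intro i hi
    interval_cases i
    rw [ZMod.natCast_val, ZMod.cast_id]
  | succ n ih =>
    intro i hi
    rcases Nat.lt_succ_iff_lt_or_eq.mp (Nat.lt_succ_of_le hi) with hi' | rfl
    · have hc := z.prop n
      have hval : z.val n = (((z.val (n+1)).val : ℕ) : ZMod (p ^ (n+1))) := by
        rw [← hc, ZMod.castHom_apply, ZMod.natCast_val]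
      have hmod : (z.val n).val = (z.val (n+1)).val % p ^ (n+1) := by
        rw [hval, ZMod.val_natCast]
      have h1 : (((z.val (n+1)).val : ℕ) : ZMod (p ^ (i+1))) =
          ((((z.val (n+1)).val % p ^ (n+1) : ℕ)) : ZMod (p ^ (i+1))) := by
        rw [ZMod.natCast_eq_natCast_iff]
        exact ((Nat.mod_modEq _ _).of_dvd (pow_dvd_pow p (by omega))).symm
      rw [h1, ← hmod, ih i (by omega)]
    · rw [ZMod.natCast_val, ZMod.cast_id]

end ZH

section WCon

variable {p : ℕ} {a : Equiv.Perm (Bd (fun _ => p))}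

/-- basepoint -/
def pt (hp : p.Prime) : Bd (fun _ => p) := fun _ => ⟨0, hp.pos⟩

lemma diff_dvd (hp : p.Prime) (ha : a ∈ treeAutGroup (fun _ => p)) (h2 : LevelTransitive a)
    (n : ℕ) (x : Bd (fun _ => p)) (s t : ℤ) :
    (∀ i < n, (a ^ s) x i = (a ^ t) x i) ↔ (p : ℤ) ^ n ∣ (s - t) :=
  (mem_stab_shift ha n x s t).trans (period hp ha h2 n x (s - t))

lemma w_exists (hp : p.Prime) (ha : a ∈ treeAutGroup (fun _ => p)) (h2 : LevelTransitive a) :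
    ∃ w : Bd (fun _ => p) → Zadic p, ∀ (x : Bd (fun _ => p)) (n : ℕ) (k : ℤ),
      ((w x).val n = ((k : ℤ) : ZMod (p ^ (n + 1)))) ↔ (∀ i < n + 1, (a ^ k) (pt hp) i = x i) := by
  classical
  haveI : NeZero p := ⟨hp.ne_zero⟩
  have h2' := h2
  choose K hK using h2
  have key : ∀ (x : Bd (fun _ => p)) (n : ℕ) (k : ℤ),
      (((K (n+1) (pt hp) x : ℤ) : ZMod (p ^ (n+1))) = ((k : ℤ) : ZMod (p ^ (n+1)))) ↔
        (∀ i < n + 1, (a ^ k) (pt hp) i = x i) := by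
    intro x n k
    rw [castIff]
    rw [show ((p ^ (n+1) : ℕ) : ℤ) = (p : ℤ) ^ (n+1) by push_cast; ring]
    have hd := diff_dvd hp ha h2' (n+1) (pt hp) (K (n+1) (pt hp) x) k
    rw [← hd]
    have hKx := hK (n+1) (pt hp) x
    constructor
    · intro H i hi
      rw [← H i hi]
      exact hKx i hi
    · intro H i hi
      rw [H i hi]
      exact hKx i hi
  refine ⟨fun x => ⟨fun n => ((K (n+1) (pt hp) x : ℤ) : ZMod (p ^ (n+1))), ?_⟩, ?_⟩
  · intro n
    rw [map_intCast]
    exact ((key x n (K (n+1+1) (pt hp) x)).mpr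
      (fun i hi => hK (n+1+1) (pt hp) x i (by omega))).symm
  · intro x n k
    exact key x n k

variable (hp : p.Prime) (ha : a ∈ treeAutGroup (fun _ => p)) (h2 : LevelTransitive a)
  {w : Bd (fun _ => p) → Zadic p}
  (hW : ∀ (x : Bd (fun _ => p)) (n : ℕ) (k : ℤ),
      ((w x).val n = ((k : ℤ) : ZMod (p ^ (n + 1)))) ↔ (∀ i < n + 1, (a ^ k) (pt hp) i = x i))

include hp ha hW in
lemma w_prefix : ∀ (x y : Bd (fun _ => p)) (n : ℕ),
    (∀ i < n, x i = y i) ↔ (∀ i < n, (w x).val i = (w y).val i) := by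
  haveI : NeZero p := ⟨hp.ne_zero⟩
  intro x y n
  constructor
  · intro h i hi
    set k : ℤ := (((w x).val i).val : ℤ) with hk
    have hx : (∀ j < i + 1, (a ^ k) (pt hp) j = x j) := (hW x i k).mp (zmod_repr _)
    have hy : (∀ j < i + 1, (a ^ k) (pt hp) j = y j) := by
      intro j hj
      rw [hx j hj]
      exact h j (by omega)
    rw [(hW y i k).mpr hy]
    exact zmod_repr _
  · intro h i hi
    set k : ℤ := (((w x).val i).val : ℤ) with hk
    have hx : (∀ j < i + 1, (a ^ k) (pt hp) j = x j) := (hW x i k).mp (zmod_repr _)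
    have hy : (∀ j < i + 1, (a ^ k) (pt hp) j = y j) := by
      apply (hW y i k).mp
      rw [← h i hi]
      exact zmod_repr _
    rw [← hx i (by omega), hy i (by omega)]

include hp ha hW in
lemma w_shift : ∀ (x : Bd (fun _ => p)) (k : ℤ) (n : ℕ),
    (w ((a ^ k) x)).val n = (w x).val n + ((k : ℤ) : ZMod (p ^ (n + 1))) := by
  haveI : NeZero p := ⟨hp.ne_zero⟩
  intro x k n
  set s : ℤ := (((w x).val n).val : ℤ) with hs
  have hx : (∀ j < n + 1, (a ^ s) (pt hp) j = x j) := (hW x n s).mp (zmod_repr _)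
  have hx2 : (∀ j < n + 1, (a ^ (k + s)) (pt hp) j = (a ^ k) x j) := by
    intro j hj
    rw [zpow_apply_add]
    exact (pres ha k (n+1) ((a ^ s) (pt hp)) x).mp hx j hj
  rw [(hW ((a ^ k) x) n (k + s)).mpr hx2]
  have h3 : ((s : ℤ) : ZMod (p ^ (n+1))) = (w x).val n := (zmod_repr _).symm
  rw [Int.cast_add, h3]
  exact add_comm _ _

include hp ha h2 hW in
lemma w_surj : Function.Surjective w := by
  haveI : NeZero p := ⟨hp.ne_zero⟩
  intro z
  refine ⟨fun i => (a ^ ((z.val i).val : ℤ)) (pt hp) i, ?_⟩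
  apply Subtype.ext
  funext n
  refine Eq.trans ((hW _ n ((z.val n).val : ℤ)).mpr ?_) (zmod_repr _).symm
  intro i hi
  have hdvd : (p : ℤ) ^ (i + 1) ∣ (((z.val n).val : ℤ) - ((z.val i).val : ℤ)) := by
    have h1 : (((z.val n).val : ℕ) : ZMod (p ^ (i+1))) = (((z.val i).val : ℕ) : ZMod (p ^ (i+1))) := by
      rw [compat_le hp z n i (by omega)]
      rw [ZMod.natCast_val, ZMod.cast_id]
    have := (castIff (N := p ^ (i+1)) ((z.val n).val : ℤ) ((z.val i).val : ℤ)).mp (by push_cast; exact h1)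
    push_cast at this ⊢
    exact this
  have := (diff_dvd hp ha h2 (i+1) (pt hp) ((z.val n).val : ℤ) ((z.val i).val : ℤ)).mpr hdvd
  exact this i (by omega)

include hp ha hW in
lemma w_inj : Function.Injective w := by
  intro x y hxy
  funext i
  exact (w_prefix hp ha hW x y (i+1)).mpr
    (fun j _ => by rw [hxy]) i (Nat.lt_succ_self i)

include hp ha hW in
lemma w_iso : ∀ x y : Bd (fun _ => p), ultraDist x y = ultraDist (w x).val (w y).val :=
  fun x y => ultraDist_congr _ _ _ _ (fun n => w_prefix hp ha hW x y n)

include hp ha hW in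
lemma w_pt : ∀ n, (w (pt hp)).val n = 0 := by
  intro n
  have : (∀ i < n + 1, (a ^ (0:ℤ)) (pt hp) i = (pt hp) i) := by
    intro i _; rw [zpow_zero, Equiv.Perm.one_apply]
  have := (hW (pt hp) n 0).mpr this
  simpa using this

include hp ha hW in
lemma w_conj : ∀ (x : Bd (fun _ => p)) (n : ℕ), (w (a x)).val n = (w x).val n + 1 := by
  intro x n
  have h1 : a x = (a ^ (1:ℤ)) x := by rw [zpow_one]
  rw [h1, w_shift hp ha hW x 1 n]
  norm_num

end WCon

section Impl

variable {p : ℕ} {a : Equiv.Perm (Bd (fun _ => p))}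

/-- transitivity at level n from exact-period point -/
lemma trans_of_stab (hp : p.Prime) (ha : a ∈ treeAutGroup (fun _ => p)) (n : ℕ)
    (x₁ : Bd (fun _ => p))
    (hstab : ∀ t : ℤ, (∀ i < n, (a ^ t) x₁ i = x₁ i) ↔ (p : ℤ) ^ n ∣ t) :
    ∀ x y : Bd (fun _ => p), ∃ k : ℤ, ∀ i < n, (a ^ k) x i = y i := by
  haveI : NeZero p := ⟨hp.ne_zero⟩
  have hdiff : ∀ s t : ℤ, (∀ i < n, (a ^ s) x₁ i = (a ^ t) x₁ i) ↔ (p : ℤ) ^ n ∣ (s - t) :=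
    fun s t => (mem_stab_shift ha n x₁ s t).trans (hstab (s - t))
  set G : ZMod (p ^ n) → (Fin n → Fin p) := fun k => fun i => (a ^ (k.val : ℤ)) x₁ i with hG
  have hGinj : Function.Injective G := by
    intro k l hkl
    have hdvd : (p : ℤ) ^ n ∣ ((k.val : ℤ) - (l.val : ℤ)) := by
      rw [← hdiff]
      intro i hi
      exact congrFun hkl ⟨i, hi⟩
    have h0 : ((((k.val : ℤ) - (l.val : ℤ)) : ℤ) : ZMod (p ^ n)) = 0 := by
      rw [ZMod.intCast_zmod_eq_zero_iff_dvd]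
      push_cast
      exact hdvd
    push_cast at h0
    rw [sub_eq_zero] at h0
    rwa [ZMod.natCast_val, ZMod.natCast_val, ZMod.cast_id, ZMod.cast_id] at h0
  have hGbij : Function.Bijective G := by
    rw [Fintype.bijective_iff_injective_and_card]
    exact ⟨hGinj, by simp [ZMod.card, Fintype.card_fun]⟩
  -- every prefix is in the orbit of x₁
  have horb : ∀ x : Bd (fun _ => p), ∃ s : ℤ, ∀ i < n, (a ^ s) x₁ i = x i := by
    intro x
    obtain ⟨k, hk⟩ := hGbij.2 (fun i => x i)
    exact ⟨(k.val : ℤ), fun i hi => congrFun hk ⟨i, hi⟩⟩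
  intro x y
  obtain ⟨s, hs⟩ := horb x
  obtain ⟨t, ht⟩ := horb y
  refine ⟨t - s, fun i hi => ?_⟩
  have h1 : ∀ i < n, (a ^ (t - s)) x i = (a ^ (t - s)) ((a ^ s) x₁) i := by
    intro i hi
    exact ((pres ha (t - s) n ((a ^ s) x₁) x).mp hs i hi).symm
  have h2 : (a ^ (t - s)) ((a ^ s) x₁) = (a ^ t) x₁ := by
    rw [← zpow_apply_add, sub_add_cancel]
  rw [h1 i hi, h2]
  exact ht i hi

lemma two_implies_three (hp : p.Prime) (ha : a ∈ treeAutGroup (fun _ => p))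
    (h2 : LevelTransitive a) :
    ∀ n : ℕ, (∀ x : Bd (fun _ => p), ∀ i < n, ((a ^ (p ^ n)) x) i = x i) ∧
      ∀ t, 0 < t → t < p ^ n → ∃ x : Bd (fun _ => p), ∃ i < n, ((a ^ t) x) i ≠ x i := by
  intro n
  constructor
  · intro x i hi
    have h := (period hp ha h2 n x ((p ^ n : ℕ) : ℤ)).mpr (by push_cast; exact dvd_refl _)
    have e : (a ^ ((p ^ n : ℕ) : ℤ)) = a ^ (p ^ n : ℕ) := zpow_natCast a (p ^ n)
    rw [e] at h
    exact h i hi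
  · intro t ht htn
    by_contra hcon
    push_neg at hcon
    have h := (period hp ha h2 n (fun _ => ⟨0, hp.pos⟩) ((t : ℕ) : ℤ)).mp (by
      intro i hi
      have e : (a ^ ((t : ℕ) : ℤ)) = a ^ (t : ℕ) := zpow_natCast a t
      rw [e]
      exact hcon _ i hi)
    have : (p ^ n : ℕ) ∣ t := by exact_mod_cast h
    exact absurd (Nat.le_of_dvd ht this) (not_le.mpr htn)

lemma three_implies_two (hp : p.Prime) (ha : a ∈ treeAutGroup (fun _ => p))
    (h3 : ∀ n : ℕ, (∀ x : Bd (fun _ => p), ∀ i < n, ((a ^ (p ^ n)) x) i = x i) ∧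
      ∀ t, 0 < t → t < p ^ n → ∃ x : Bd (fun _ => p), ∃ i < n, ((a ^ t) x) i ≠ x i) :
    LevelTransitive a := by
  intro n
  rcases Nat.eq_zero_or_pos n with rfl | hn
  · intro x y; exact ⟨0, fun i hi => absurd hi (Nat.not_lt_zero i)⟩
  obtain ⟨h31, h32⟩ := h3 n
  obtain ⟨x₁, hx₁⟩ := h32 (p ^ (n - 1)) (Nat.pow_pos hp.pos)
    (Nat.pow_lt_pow_right hp.one_lt (by omega))
  -- stabilizer of x₁ is exactly p^n ℤ
  have hstab : ∀ t : ℤ, (∀ i < n, (a ^ t) x₁ i = x₁ i) ↔ (p : ℤ) ^ n ∣ t := by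
    have hmemP : ((p ^ n : ℕ) : ℤ) ∈ stab a ha n x₁ := by
      intro i hi
      have e : (a ^ ((p ^ n : ℕ) : ℤ)) = a ^ (p ^ n : ℕ) := zpow_natCast a (p ^ n)
      rw [e]
      exact h31 x₁ i hi
    have hnotP : ¬ (((p ^ (n - 1) : ℕ) : ℤ) ∈ stab a ha n x₁) := by
      intro hmem
      obtain ⟨i, hi, hne⟩ := hx₁
      apply hne
      have e : (a ^ ((p ^ (n - 1) : ℕ) : ℤ)) = a ^ (p ^ (n - 1) : ℕ) :=
        zpow_natCast a (p ^ (n - 1))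
      rw [← e]
      exact hmem i hi
    obtain ⟨g, hg⟩ := Int.subgroup_cyclic (stab a ha n x₁)
    have hmem : ∀ s : ℤ, s ∈ stab a ha n x₁ ↔ g ∣ s := by
      intro s
      rw [hg, AddSubgroup.mem_closure_singleton]
      constructor
      · rintro ⟨k, rfl⟩; exact ⟨k, by rw [zsmul_eq_mul, Int.cast_id, mul_comm]⟩
      · rintro ⟨c, rfl⟩; exact ⟨c, by rw [zsmul_eq_mul, Int.cast_id, mul_comm]⟩
    have hgP : g ∣ ((p ^ n : ℕ) : ℤ) := (hmem _).mp hmemP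
    have hgnat : g.natAbs ∣ p ^ n := by
      have h' := Int.natAbs_dvd_natAbs.mpr hgP
      rwa [Int.natAbs_natCast] at h'
    obtain ⟨j, hj, hjeq⟩ := (Nat.dvd_prime_pow hp).mp hgnat
    have hjn : j = n := by
      by_contra hjne
      apply hnotP
      rw [hmem]
      have h1 : g.natAbs ∣ p ^ (n - 1) := by
        rw [hjeq]; exact pow_dvd_pow p (by omega)
      exact Int.natAbs_dvd.mp (Int.natCast_dvd_natCast.mpr h1)
    intro t
    have hmt := hmem t
    have hgabs : (g.natAbs : ℤ) = (p : ℤ) ^ n := by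
      rw [hjeq, hjn]; push_cast; ring
    constructor
    · intro hstab'
      have hgt : g ∣ t := hmt.mp hstab'
      have h1 : (g.natAbs : ℤ) ∣ t := Int.natAbs_dvd.mpr hgt
      rwa [hgabs] at h1
    · intro hpt
      refine hmt.mpr (Int.natAbs_dvd.mp ?_)
      rwa [hgabs]
  exact trans_of_stab hp ha n x₁ hstab

end Impl

section Impl2

variable {p : ℕ} {a : Equiv.Perm (Bd (fun _ => p))}

lemma bddAbove_ud (f g : Bd (fun _ => p) → Bd (fun _ => p)) :
    BddAbove (Set.range fun x => ultraDist (f x) (g x)) := by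
  refine ⟨1, ?_⟩
  rintro r ⟨x, rfl⟩
  exact ultraDist_le_one _ _

lemma two_implies_one (h2 : LevelTransitive a) : ∀ x : Bd (fun _ => p), Dense (orbitZ a x) := by
  intro x
  rw [dense_iff_inter_open]
  rintro U hU ⟨y, hy⟩
  obtain ⟨I, u, hu, hsub⟩ := isOpen_pi_iff.mp hU y hy
  obtain ⟨k, hk⟩ := h2 ((I.sup id) + 1) x y
  refine ⟨(a ^ k) x, hsub ?_, ⟨k, rfl⟩⟩
  intro i hi
  have hlt : i < (I.sup id) + 1 :=
    Nat.lt_succ_of_le (Finset.le_sup (f := id) hi)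
  rw [hk i hlt]
  exact (hu i hi).2

lemma one_implies_two (h1 : ∀ x : Bd (fun _ => p), Dense (orbitZ a x)) :
    LevelTransitive a := by
  intro n x y
  have hy := h1 x y
  have hopen : IsOpen {z : Bd (fun _ => p) | ∀ i < n, z i = y i} := by
    have he : {z : Bd (fun _ => p) | ∀ i < n, z i = y i} =
        Set.pi ↑(Finset.range n) (fun i => {y i}) := by
      ext z
      simp [Set.mem_pi]
    rw [he]
    exact isOpen_set_pi (Finset.range n).finite_toSet (fun i _ => isOpen_discrete _)
  obtain ⟨z, hz1, k, rfl⟩ := mem_closure_iff.mp hy _ hopen (fun i _ => rfl)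
  exact ⟨k, hz1⟩

lemma five_implies_two (hp : p.Prime)
    (h5 : ∃ w : Bd (fun _ => p) → Zadic p,
      Function.Bijective w ∧
      (∀ x y : Bd (fun _ => p), ultraDist x y = ultraDist (w x).val (w y).val) ∧
      (∀ x : Bd (fun _ => p), (w (a x)).val = fun n => (w x).val n + 1)) :
    LevelTransitive a := by
  obtain ⟨w, hbij, hiso, hconj⟩ := h5
  haveI : NeZero p := ⟨hp.ne_zero⟩
  have hiter : ∀ (k : ℕ) (x : Bd (fun _ => p)) (n : ℕ),
      (w ((a ^ k) x)).val n = (w x).val n + (k : ZMod (p ^ (n+1))) := by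
    intro k
    induction k with
    | zero => intro x n; simp
    | succ k ih =>
      intro x n
      have he : (a ^ (k+1)) x = (a ^ k) (a x) := by
        rw [pow_succ, Equiv.Perm.mul_apply]
      rw [he, ih (a x) n, congrFun (hconj x) n]
      push_cast
      ring
  intro n x y
  rcases Nat.eq_zero_or_pos n with rfl | hn
  · exact ⟨0, fun i hi => absurd hi (Nat.not_lt_zero i)⟩
  obtain ⟨m, rfl⟩ : ∃ m, n = m + 1 := ⟨n - 1, by omega⟩
  set δ : ZMod (p ^ (m+1)) := (w y).val m - (w x).val m with hδ
  refine ⟨(δ.val : ℤ), ?_⟩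
  have hz : (a ^ ((δ.val : ℕ) : ℤ)) = a ^ (δ.val : ℕ) := zpow_natCast _ _
  rw [hz]
  have hm : (w ((a ^ (δ.val : ℕ)) x)).val m = (w y).val m := by
    rw [hiter, ZMod.natCast_val, ZMod.cast_id, hδ]
    ring
  have hall : ∀ i < m + 1, (w ((a ^ (δ.val : ℕ)) x)).val i = (w y).val i := by
    intro i hi
    rw [← compat_le hp (w ((a ^ (δ.val : ℕ)) x)) m i (by omega),
        ← compat_le hp (w y) m i (by omega), hm]
  have hd : ultraDist ((a ^ (δ.val : ℕ)) x) y ≤ (2:ℝ)⁻¹ ^ (m+1) := by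
    rw [hiso]
    exact (ultraDist_le_iff _ _ _).mpr hall
  exact (ultraDist_le_iff _ _ _).mp hd

lemma four_implies_three (hp : p.Prime)
    (h4 : ∃ ψ : {f : Bd (fun _ => p) → Bd (fun _ => p) //
            InClosure ((Subgroup.zpowers a : Subgroup (Equiv.Perm (Bd (fun _ => p)))) :
              Set (Equiv.Perm (Bd (fun _ => p)))) f} → Zadic p,
      Function.Bijective ψ ∧
      (∀ f g, ∀ hfg : InClosure ((Subgroup.zpowers a : Subgroup (Equiv.Perm (Bd (fun _ => p)))) :
          Set (Equiv.Perm (Bd (fun _ => p)))) (f.val ∘ g.val),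
        (ψ ⟨f.val ∘ g.val, hfg⟩).val = fun n => (ψ f).val n + (ψ g).val n) ∧
      (∀ f g, ultraDistMap f.val g.val = ultraDist (ψ f).val (ψ g).val)) :
    ∀ n : ℕ, (∀ x : Bd (fun _ => p), ∀ i < n, ((a ^ (p ^ n)) x) i = x i) ∧
      ∀ t, 0 < t → t < p ^ n → ∃ x : Bd (fun _ => p), ∃ i < n, ((a ^ t) x) i ≠ x i := by
  obtain ⟨ψ, ⟨hinj, hsurj⟩, hadd, hiso⟩ := h4
  haveI : NeZero p := ⟨hp.ne_zero⟩
  haveI : Nonempty (Bd (fun _ => p)) := ⟨fun _ => ⟨0, hp.pos⟩⟩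
  have hPcl : ∀ k : ℤ, InClosure
      ((Subgroup.zpowers a : Subgroup (Equiv.Perm (Bd (fun _ => p)))) :
        Set (Equiv.Perm (Bd (fun _ => p)))) (⇑(a ^ k)) :=
    fun k n => ⟨a ^ k, Subgroup.mem_zpowers_iff.mpr ⟨k, rfl⟩, fun x i _ => rfl⟩
  set P : ℤ → {f : Bd (fun _ => p) → Bd (fun _ => p) //
      InClosure ((Subgroup.zpowers a : Subgroup (Equiv.Perm (Bd (fun _ => p)))) :
        Set (Equiv.Perm (Bd (fun _ => p)))) f} := fun k => ⟨⇑(a ^ k), hPcl k⟩ with hP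
  have hcomp : ∀ s t : ℤ, (P (s+t)).val = (P s).val ∘ (P t).val := by
    intro s t
    funext x
    exact zpow_apply_add a s t x
  have hadd' : ∀ s t : ℤ, (ψ (P (s+t))).val = fun n => (ψ (P s)).val n + (ψ (P t)).val n := by
    intro s t
    have hfg : InClosure _ ((P s).val ∘ (P t).val) := hcomp s t ▸ (P (s+t)).prop
    have he : P (s+t) = ⟨(P s).val ∘ (P t).val, hfg⟩ := Subtype.ext (hcomp s t)
    rw [he]
    exact hadd (P s) (P t) hfg
  have h0 : ∀ n, (ψ (P 0)).val n = 0 := by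
    intro n
    have h := congrFun (hadd' 0 0) n
    simp only [add_zero] at h
    exact left_eq_add.mp h
  have hPk : ∀ (k : ℤ) (n : ℕ),
      (ψ (P k)).val n = (k : ZMod (p ^ (n+1))) * (ψ (P 1)).val n := by
    intro k
    induction k using Int.induction_on with
    | zero => intro n; rw [h0 n]; push_cast; ring
    | succ k ih =>
      intro n
      have h := congrFun (hadd' k 1) n
      rw [h, ih n]
      push_cast
      ring
    | pred k ih =>
      intro n
      have he : (-(k : ℤ) - 1) = (-(k:ℤ)) + (-1) := by ring
      have hneg : (ψ (P (-1))).val n = - (ψ (P 1)).val n := by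
        have h := congrFun (hadd' 1 (-1)) n
        have he2 : (1 : ℤ) + (-1) = 0 := by ring
        rw [he2, h0 n] at h
        linear_combination -h
      rw [he]
      have h := congrFun (hadd' (-(k:ℤ)) (-1)) n
      rw [h, ih n, hneg]
      push_cast
      ring
  have hone : ∀ n, ∃ k : ℤ, (k : ZMod (p ^ (n+1))) * (ψ (P 1)).val n = 1 := by
    intro n
    obtain ⟨f, hf⟩ := hsurj ⟨fun _ => 1, fun _ => map_one _⟩
    obtain ⟨g, hg, happrox⟩ := f.prop (n+1)
    obtain ⟨k, hk⟩ := Subgroup.mem_zpowers_iff.mp hg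
    have hd : ultraDistMap f.val (P k).val ≤ (2:ℝ)⁻¹ ^ (n+1) := by
      apply ciSup_le
      intro x
      refine (ultraDist_le_iff _ _ _).mpr ?_
      intro i hi
      rw [happrox x i hi, ← hk]
    rw [hiso f (P k)] at hd
    have h := (ultraDist_le_iff _ _ _).mp hd n (Nat.lt_succ_self n)
    rw [hf, hPk k n] at h
    exact ⟨k, h.symm⟩
  intro n
  constructor
  · intro x i hi
    have hcoord : ∀ j < n, (ψ (P ((p^n : ℕ) : ℤ))).val j = (ψ (P 0)).val j := by
      intro j hj
      have hz : (((p^n : ℕ) : ℤ) : ZMod (p ^ (j+1))) = 0 := by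
        rw [ZMod.intCast_zmod_eq_zero_iff_dvd]
        push_cast
        exact pow_dvd_pow _ (by omega)
      rw [hPk ((p^n : ℕ) : ℤ) j, h0 j, hz, zero_mul]
    have hd : ultraDist (ψ (P ((p^n:ℕ):ℤ))).val (ψ (P 0)).val ≤ (2:ℝ)⁻¹ ^ n :=
      (ultraDist_le_iff _ _ _).mpr hcoord
    rw [← hiso] at hd
    have hx : ultraDist ((P ((p^n:ℕ):ℤ)).val x) ((P 0).val x) ≤ (2:ℝ)⁻¹ ^ n :=
      le_trans (le_ciSup (bddAbove_ud _ _) x) hd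
    have h := (ultraDist_le_iff _ _ _).mp hx i hi
    have e1 : (P ((p^n:ℕ):ℤ)).val x = (a ^ (p^n : ℕ)) x := by
      rw [hP]; simp only; rw [zpow_natCast]
    have e2 : (P 0).val x = x := by
      rw [hP]; simp only; rw [zpow_zero, Equiv.Perm.one_apply]
    rwa [e1, e2] at h
  · intro t ht htn
    by_contra hcon
    push_neg at hcon
    have hn0 : n ≠ 0 := by
      rintro rfl
      simp at htn
      omega
    obtain ⟨m, rfl⟩ : ∃ m, n = m + 1 := ⟨n - 1, by omega⟩
    have hd : ultraDistMap (P ((t:ℕ):ℤ)).val (P 0).val ≤ (2:ℝ)⁻¹ ^ (m+1) := by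
      apply ciSup_le
      intro x
      refine (ultraDist_le_iff _ _ _).mpr ?_
      intro i hi
      have e1 : (P ((t:ℕ):ℤ)).val x = (a ^ (t : ℕ)) x := by
        rw [hP]; simp only; rw [zpow_natCast]
      have e2 : (P 0).val x = x := by
        rw [hP]; simp only; rw [zpow_zero, Equiv.Perm.one_apply]
      rw [e1, e2]
      exact hcon x i hi
    rw [hiso] at hd
    have h := (ultraDist_le_iff _ _ _).mp hd m (Nat.lt_succ_self m)
    rw [hPk ((t:ℕ):ℤ) m, h0 m] at h
    obtain ⟨k, hk⟩ := hone m
    have ht0 : ((t:ℤ) : ZMod (p ^ (m+1))) = 0 := by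
      calc ((t:ℤ) : ZMod (p ^ (m+1)))
          = ((t:ℤ) : ZMod (p ^ (m+1))) * ((k : ZMod (p ^ (m+1))) * (ψ (P 1)).val m) := by
            rw [hk, mul_one]
        _ = (k : ZMod (p ^ (m+1))) * (((t:ℤ) : ZMod (p ^ (m+1))) * (ψ (P 1)).val m) := by
            ring
        _ = 0 := by rw [h, mul_zero]
    rw [ZMod.intCast_zmod_eq_zero_iff_dvd] at ht0
    have hdvd : (p ^ (m+1) : ℕ) ∣ t := by exact_mod_cast ht0
    have := Nat.le_of_dvd ht hdvd
    omega

end Impl2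

section Impl3

variable {p : ℕ} {a : Equiv.Perm (Bd (fun _ => p))}

lemma two_implies_five (hp : p.Prime) (ha : a ∈ treeAutGroup (fun _ => p))
    (h2 : LevelTransitive a) :
    ∃ w : Bd (fun _ => p) → Zadic p,
      Function.Bijective w ∧
      (∀ x y : Bd (fun _ => p), ultraDist x y = ultraDist (w x).val (w y).val) ∧
      (∀ x : Bd (fun _ => p), (w (a x)).val = fun n => (w x).val n + 1) := by
  obtain ⟨w, hW⟩ := w_exists hp ha h2
  exact ⟨w, ⟨w_inj hp ha hW, w_surj hp ha h2 hW⟩, w_iso hp ha hW,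
    fun x => funext (fun n => w_conj hp ha hW x n)⟩

lemma two_implies_four (hp : p.Prime) (ha : a ∈ treeAutGroup (fun _ => p))
    (h2 : LevelTransitive a) :
    ∃ ψ : {f : Bd (fun _ => p) → Bd (fun _ => p) //
            InClosure ((Subgroup.zpowers a : Subgroup (Equiv.Perm (Bd (fun _ => p)))) :
              Set (Equiv.Perm (Bd (fun _ => p)))) f} → Zadic p,
      Function.Bijective ψ ∧
      (∀ f g, ∀ hfg : InClosure ((Subgroup.zpowers a : Subgroup (Equiv.Perm (Bd (fun _ => p)))) :
          Set (Equiv.Perm (Bd (fun _ => p)))) (f.val ∘ g.val),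
        (ψ ⟨f.val ∘ g.val, hfg⟩).val = fun n => (ψ f).val n + (ψ g).val n) ∧
      (∀ f g, ultraDistMap f.val g.val = ultraDist (ψ f).val (ψ g).val) := by
  classical
  haveI : NeZero p := ⟨hp.ne_zero⟩
  haveI : Nonempty (Bd (fun _ => p)) := ⟨pt hp⟩
  obtain ⟨w, hW⟩ := w_exists hp ha h2
  have happ : ∀ (f : {f : Bd (fun _ => p) → Bd (fun _ => p) //
      InClosure ((Subgroup.zpowers a : Subgroup (Equiv.Perm (Bd (fun _ => p)))) :
        Set (Equiv.Perm (Bd (fun _ => p)))) f}) (n : ℕ),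
      ∃ s : ℤ, ∀ x : Bd (fun _ => p), ∀ i < n, f.val x i = (a ^ s) x i := by
    intro f n
    obtain ⟨g, hg, h⟩ := f.prop n
    obtain ⟨s, hs⟩ := Subgroup.mem_zpowers_iff.mp hg
    exact ⟨s, fun x i hi => by rw [h x i hi, ← hs]⟩
  refine ⟨fun f => w (f.val (pt hp)), ⟨?_, ?_⟩, ?_, ?_⟩
  · -- injective
    intro f g hfg
    apply Subtype.ext
    funext x i
    obtain ⟨s, hs⟩ := happ f (i+1)
    obtain ⟨t, ht⟩ := happ g (i+1)
    have h1 : (w (f.val (pt hp))).val i = ((s:ℤ) : ZMod (p ^ (i+1))) :=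
      (hW _ i s).mpr (fun j hj => (hs (pt hp) j hj).symm)
    have h2' : (w (g.val (pt hp))).val i = ((t:ℤ) : ZMod (p ^ (i+1))) :=
      (hW _ i t).mpr (fun j hj => (ht (pt hp) j hj).symm)
    have hcast : ((s:ℤ) : ZMod (p ^ (i+1))) = ((t:ℤ) : ZMod (p ^ (i+1))) := by
      have hfg' : w (f.val (pt hp)) = w (g.val (pt hp)) := hfg
      rw [← h1, ← h2', hfg']
    have hdvd : (p:ℤ) ^ (i+1) ∣ s - t := by
      have h := (castIff (N := p ^ (i+1)) s t).mp hcast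
      push_cast at h
      exact h
    have h := (diff_dvd hp ha h2 (i+1) x s t).mpr hdvd
    rw [hs x i (Nat.lt_succ_self i), ht x i (Nat.lt_succ_self i)]
    exact h i (Nat.lt_succ_self i)
  · -- surjective
    intro z
    have hwsurj := w_surj hp ha h2 hW
    set F : Bd (fun _ => p) → Zadic p := fun x =>
      ⟨fun n => (w x).val n + z.val n, by
        intro n
        rw [map_add, (w x).prop n, z.prop n]⟩ with hF
    set f : Bd (fun _ => p) → Bd (fun _ => p) :=
      fun x => Function.surjInv hwsurj (F x) with hf
    have hwf : ∀ x, w (f x) = F x := fun x => Function.surjInv_eq hwsurj (F x)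
    have hfcl : InClosure ((Subgroup.zpowers a : Subgroup (Equiv.Perm (Bd (fun _ => p)))) :
        Set (Equiv.Perm (Bd (fun _ => p)))) f := by
      intro n
      refine ⟨a ^ ((z.val n).val : ℤ), Subgroup.mem_zpowers_iff.mpr ⟨_, rfl⟩, ?_⟩
      intro x i hi
      have hco : ∀ j < n + 1, (w (f x)).val j = (w ((a ^ ((z.val n).val : ℤ)) x)).val j := by
        intro j hj
        have e1 : (w (f x)).val j = (w x).val j + z.val j := by
          rw [hwf x]
        rw [e1, w_shift hp ha hW x _ j]
        congr 1
        rw [← compat_le hp z n j (by omega)]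
        push_cast
        rfl
      exact (w_prefix hp ha hW (f x) _ (n+1)).mpr hco i (by omega)
    refine ⟨⟨f, hfcl⟩, ?_⟩
    apply Subtype.ext
    funext n
    show (w (f (pt hp))).val n = z.val n
    rw [hwf (pt hp)]
    show (w (pt hp)).val n + z.val n = z.val n
    rw [w_pt hp ha hW n, zero_add]
  · -- additive
    intro f g hfg
    funext n
    obtain ⟨s, hs⟩ := happ f (n+1)
    obtain ⟨t, ht⟩ := happ g (n+1)
    have h1 : (w (f.val (g.val (pt hp)))).val n = ((s + t : ℤ) : ZMod (p ^ (n+1))) := by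
      apply (hW _ n (s+t)).mpr
      intro j hj
      rw [zpow_apply_add]
      have e2 : ∀ j < n+1, (a ^ s) ((a ^ t) (pt hp)) j = (a ^ s) (g.val (pt hp)) j :=
        (pres ha s (n+1) ((a ^ t) (pt hp)) (g.val (pt hp))).mp
          (fun j hj => (ht (pt hp) j hj).symm)
      rw [e2 j hj]
      exact (hs (g.val (pt hp)) j hj).symm
    have h2' : (w (f.val (pt hp))).val n = ((s:ℤ) : ZMod (p ^ (n+1))) :=
      (hW _ n s).mpr (fun j hj => (hs (pt hp) j hj).symm)
    have h3' : (w (g.val (pt hp))).val n = ((t:ℤ) : ZMod (p ^ (n+1))) :=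
      (hW _ n t).mpr (fun j hj => (ht (pt hp) j hj).symm)
    show (w ((f.val ∘ g.val) (pt hp))).val n = (w (f.val (pt hp))).val n + (w (g.val (pt hp))).val n
    rw [Function.comp_apply, h1, h2', h3']
    push_cast
    ring
  · -- isometry
    intro f g
    have hiff : ∀ (x : Bd (fun _ => p)) (n : ℕ),
        (∀ i < n, f.val x i = g.val x i) ↔ (∀ i < n, f.val (pt hp) i = g.val (pt hp) i) := by
      intro x n
      obtain ⟨s, hs⟩ := happ f n
      obtain ⟨t, ht⟩ := happ g n
      have key : ∀ y : Bd (fun _ => p),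
          (∀ i < n, f.val y i = g.val y i) ↔ (p:ℤ) ^ n ∣ (s - t) := by
        intro y
        rw [← diff_dvd hp ha h2 n y s t]
        constructor
        · intro h i hi
          rw [← hs y i hi, ← ht y i hi]
          exact h i hi
        · intro h i hi
          rw [hs y i hi, ht y i hi]
          exact h i hi
      rw [key x, key (pt hp)]
    have hconst : ∀ x, ultraDist (f.val x) (g.val x) =
        ultraDist (f.val (pt hp)) (g.val (pt hp)) :=
      fun x => ultraDist_congr _ _ _ _ (hiff x)
    have hmap : ultraDistMap f.val g.val = ultraDist (f.val (pt hp)) (g.val (pt hp)) := by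
      unfold ultraDistMap
      rw [show (fun x => ultraDist (f.val x) (g.val x)) =
          (fun _ : Bd (fun _ => p) => ultraDist (f.val (pt hp)) (g.val (pt hp))) from
        funext hconst]
      exact ciSup_const
    rw [hmap, w_iso hp ha hW]

end Impl3

/-- Let `p` be prime and `T` the `p`-ary rooted tree. For `a ∈ Aut(T)` the
following are equivalent: (1) `a` is minimal (every orbit is dense in the
boundary); (2) `a` acts transitively on every vertex level; (3) the order of
`a` restricted to `V n` equals `p ^ n` for every `n`; (4) the closure of
`⟨a⟩` is isometrically isomorphic to the `p`-adic integers `ℤ_p`; (5) the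
system `(∂T, a)` is conjugate by an isometry to the `p`-adic odometer
`(ℤ_p, x ↦ x + 1)`. -/
theorem settled_stmt8 (p : ℕ) (hp : p.Prime)
    (a : Equiv.Perm (Bd (fun _ => p))) (ha : a ∈ treeAutGroup (fun _ => p)) :
    List.TFAE
      [ -- (1) minimal
        (∀ x : Bd (fun _ => p), Dense (orbitZ a x)),
        -- (2) transitive on every level
        LevelTransitive a,
        -- (3) the order of the restriction to `V n` is `p ^ n`
        (∀ n : ℕ, (∀ x : Bd (fun _ => p), ∀ i < n, ((a ^ (p ^ n)) x) i = x i) ∧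
          ∀ t, 0 < t → t < p ^ n → ∃ x : Bd (fun _ => p), ∃ i < n, ((a ^ t) x) i ≠ x i),
        -- (4) the closure of `⟨a⟩` is isometrically isomorphic to `ℤ_p`
        (∃ ψ : {f : Bd (fun _ => p) → Bd (fun _ => p) //
                InClosure ((Subgroup.zpowers a : Subgroup (Equiv.Perm (Bd (fun _ => p)))) :
                  Set (Equiv.Perm (Bd (fun _ => p)))) f} → Zadic p,
          Function.Bijective ψ ∧
          (∀ f g, ∀ hfg : InClosure ((Subgroup.zpowers a : Subgroup (Equiv.Perm (Bd (fun _ => p)))) :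
              Set (Equiv.Perm (Bd (fun _ => p)))) (f.val ∘ g.val),
            (ψ ⟨f.val ∘ g.val, hfg⟩).val = fun n => (ψ f).val n + (ψ g).val n) ∧
          (∀ f g, ultraDistMap f.val g.val = ultraDist (ψ f).val (ψ g).val)),
        -- (5) `(∂T, a)` is conjugate by an isometry to the odometer `(ℤ_p, +1)`
        (∃ w : Bd (fun _ => p) → Zadic p,
          Function.Bijective w ∧
          (∀ x y : Bd (fun _ => p), ultraDist x y = ultraDist (w x).val (w y).val) ∧
          (∀ x : Bd (fun _ => p), (w (a x)).val = fun n => (w x).val n + 1)) ] := by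
  
  tfae_have 1 → 2 := one_implies_two
  tfae_have 2 → 1 := two_implies_one
  tfae_have 2 → 3 := two_implies_three hp ha
  tfae_have 3 → 2 := three_implies_two hp ha
  tfae_have 2 → 4 := two_implies_four hp ha
  tfae_have 2 → 5 := two_implies_five hp ha
  tfae_have 4 → 3 := four_implies_three hp
  tfae_have 5 → 2 := five_implies_two hp
  tfae_finish
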